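/- Let Q be a finite acyclic quiver and S, T subquivers of Q, each having a unique source (s₀ and t₀ respectively). Then every connected component of the fiber product P_{S,s₀} ×_Q P_{T,t₀}, regarded as a quiver over Q via the restricted structure map, is isomorphic over Q to a path quiver P_{W,j}, where W is a subquiver of Q and j is a vertex of W with no incoming arrows in W such that every vertex of W is the terminal vertex of a path in W starting at j. -/

import Mathlib

/-! ## Bundled quivers and quivers over a fixed quiver -/

/-- A (bundled) quiver: a set of vertices, a set of arrows, and source/target maps. -/
structure BQuiv : Type 1 where
  V : Type
  E : Type
  s : E → V
  t : E → V

namespace BQuiv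

/-- A morphism of quivers (a "coloring"). -/
@[ext]
structure Hom (A B : BQuiv) where
  onV : A.V → B.V
  onE : A.E → B.E
  hs : ∀ e : A.E, B.s (onE e) = onV (A.s e)
  ht : ∀ e : A.E, B.t (onE e) = onV (A.t e)

/-- Composition of morphisms of quivers. -/
def Hom.comp {A B C : BQuiv} (f : Hom A B) (g : Hom B C) : Hom A C where
  onV v := g.onV (f.onV v)
  onE e := g.onE (f.onE e)
  hs e := by rw [g.hs, f.hs]
  ht e := by rw [g.ht, f.ht]

/-- `Q.IsPathFrom a b es` : the list of edges `es` forms a path from `a` to `b` in `Q`. -/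
def IsPathFrom (Q : BQuiv) : Q.V → Q.V → List Q.E → Prop
  | a, b, [] => a = b
  | a, b, e :: es => Q.s e = a ∧ Q.IsPathFrom (Q.t e) b es

theorem IsPathFrom.snoc {Q : BQuiv} {a b : Q.V} {es : List Q.E}
    (h : Q.IsPathFrom a b es) {e : Q.E} (he : Q.s e = b) :
    Q.IsPathFrom a (Q.t e) (es ++ [e]) := by
  induction es generalizing a with
  | nil =>
      simp only [IsPathFrom] at h
      subst h
      exact ⟨he, rfl⟩
  | cons f fs ih =>
      obtain ⟨h1, h2⟩ := h
      exact ⟨h1, ih h2⟩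

theorem IsPathFrom.append {Q : BQuiv} {a b c : Q.V} {es fs : List Q.E}
    (h : Q.IsPathFrom a b es) (h' : Q.IsPathFrom b c fs) :
    Q.IsPathFrom a c (es ++ fs) := by
  induction es generalizing a with
  | nil =>
      simp only [IsPathFrom] at h
      subst h
      exact h'
  | cons f gs ih =>
      obtain ⟨h1, h2⟩ := h
      exact ⟨h1, ih h2⟩

/-- `Q` is acyclic if every path from a vertex to itself is trivial. -/
def IsAcyclic (Q : BQuiv) : Prop :=
  ∀ (v : Q.V) (es : List Q.E), Q.IsPathFrom v v es → es = []

/-! ## Subquivers -/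

/-- A subquiver of `Q`: a subset of vertices and a subset of arrows with endpoints in it. -/
structure Sub (Q : BQuiv) where
  verts : Set Q.V
  edges : Set Q.E
  src_mem : ∀ e ∈ edges, Q.s e ∈ verts
  tgt_mem : ∀ e ∈ edges, Q.t e ∈ verts

/-- The quiver underlying a subquiver. -/
def Sub.toBQuiv {Q : BQuiv} (T : Sub Q) : BQuiv where
  V := T.verts
  E := T.edges
  s e := ⟨Q.s e.1, T.src_mem e.1 e.2⟩
  t e := ⟨Q.t e.1, T.tgt_mem e.1 e.2⟩

/-- The inclusion of a subquiver; `E_T` is `(T.toBQuiv, T.incl)` as a quiver over `Q`. -/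
def Sub.incl {Q : BQuiv} (T : Sub Q) : Hom T.toBQuiv Q where
  onV := Subtype.val
  onE := Subtype.val
  hs _ := rfl
  ht _ := rfl

/-- `T.IsPathIn a b es` : `es` is a path from `a` to `b` lying entirely in the
subquiver `T`. -/
def Sub.IsPathIn {Q : BQuiv} (T : Sub Q) (a b : Q.V) (es : List Q.E) : Prop :=
  a ∈ T.verts ∧ Q.IsPathFrom a b es ∧ ∀ e ∈ es, e ∈ T.edges

/-- Intersection of subquivers. -/
def Sub.inter {Q : BQuiv} (S T : Sub Q) : Sub Q where
  verts := S.verts ∩ T.verts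
  edges := S.edges ∩ T.edges
  src_mem e he := ⟨S.src_mem e he.1, T.src_mem e he.2⟩
  tgt_mem e he := ⟨S.tgt_mem e he.1, T.tgt_mem e he.2⟩

/-- The full subquiver (all of `Q`). -/
def fullSub (Q : BQuiv) : Sub Q where
  verts := Set.univ
  edges := Set.univ
  src_mem _ _ := trivial
  tgt_mem _ _ := trivial

/-- `S ⊆ T` for subquivers. -/
def Sub.le {Q : BQuiv} (S T : Sub Q) : Prop :=
  S.verts ⊆ T.verts ∧ S.edges ⊆ T.edges

/-- The successor closure of a vertex `j` in a subquiver `U`: the vertices of `U`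
reachable from `j` by a path in `U`, together with all arrows of `U` between them. -/
def succClosure {Q : BQuiv} (U : Sub Q) (j : Q.V) : Sub Q where
  verts := {v | ∃ es, U.IsPathIn j v es}
  edges := {e | e ∈ U.edges ∧ (∃ es, U.IsPathIn j (Q.s e) es) ∧ ∃ es, U.IsPathIn j (Q.t e) es}
  src_mem _ he := he.2.1
  tgt_mem _ he := he.2.2

/-- `s₀` is the unique source of the subquiver `S`. -/
def Sub.IsUniqueSource {Q : BQuiv} (S : Sub Q) (s₀ : Q.V) : Prop :=
  s₀ ∈ S.verts ∧ (∀ e ∈ S.edges, Q.t e ≠ s₀) ∧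
    ∀ v ∈ S.verts, (∀ e ∈ S.edges, Q.t e ≠ v) → v = s₀

/-- `u₀` is the unique sink of the subquiver `S`. -/
def Sub.IsUniqueSink {Q : BQuiv} (S : Sub Q) (u₀ : Q.V) : Prop :=
  u₀ ∈ S.verts ∧ (∀ e ∈ S.edges, Q.s e ≠ u₀) ∧
    ∀ v ∈ S.verts, (∀ e ∈ S.edges, Q.s e ≠ v) → v = u₀

/-! ## Path and copath quivers -/

/-- The path quiver `P_{T,t}`: vertices are the paths in `T` starting at `t` (recorded as
a pair (endpoint, list of edges)); there is one arrow `p ⟶ p·α` for each path-vertex `p`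
and each arrow `α` of `T` starting at the endpoint of `p`. -/
def PathQ {Q : BQuiv} (T : Sub Q) (t : Q.V) : BQuiv where
  V := {x : Q.V × List Q.E // T.IsPathIn t x.1 x.2}
  E := {y : (Q.V × List Q.E) × Q.E //
        T.IsPathIn t y.1.1 y.1.2 ∧ y.2 ∈ T.edges ∧ Q.s y.2 = y.1.1}
  s y := ⟨y.1.1, y.2.1⟩
  t y := ⟨(Q.t y.1.2, y.1.1.2 ++ [y.1.2]),
    ⟨y.2.1.1, (y.2.1.2.1).snoc y.2.2.2, by
      intro e he
      rcases List.mem_append.1 he with h | h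
      · exact y.2.1.2.2 e h
      · rw [List.mem_singleton.1 h]; exact y.2.2.1⟩⟩

/-- The structure map of the path quiver `P_{T,t}` as a quiver over `Q`: a path is sent
to its terminal vertex, and the arrow `(p, α)` to `α`. -/
def pathPi {Q : BQuiv} (T : Sub Q) (t : Q.V) : Hom (PathQ T t) Q where
  onV p := p.1.1
  onE y := y.1.2
  hs y := y.2.2.2
  ht _ := rfl

/-- The copath quiver `I_{T,u}`: vertices are the paths in `T` ending at `u` (recorded as
a pair (starting vertex, list of edges)); there is one arrow `α·q ⟶ q` for each vertex `q`
and each arrow `α` of `T` ending at the starting vertex of `q`. -/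
def CoPathQ {Q : BQuiv} (T : Sub Q) (u : Q.V) : BQuiv where
  V := {x : Q.V × List Q.E // T.IsPathIn x.1 u x.2}
  E := {y : Q.E × (Q.V × List Q.E) //
        T.IsPathIn y.2.1 u y.2.2 ∧ y.1 ∈ T.edges ∧ Q.t y.1 = y.2.1}
  s y := ⟨(Q.s y.1.1, y.1.1 :: y.1.2.2),
    ⟨T.src_mem _ y.2.2.1, ⟨rfl, by rw [y.2.2.2]; exact y.2.1.2.1⟩, by
      intro e he
      rcases List.mem_cons.1 he with h | h
      · rw [h]; exact y.2.2.1
      · exact y.2.1.2.2 e h⟩⟩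
  t y := ⟨y.1.2, y.2.1⟩

/-- The structure map of the copath quiver `I_{T,u}` as a quiver over `Q`: a path is sent
to its starting vertex, and the arrow `(α, q)` to `α`. -/
def coPathPi {Q : BQuiv} (T : Sub Q) (u : Q.V) : Hom (CoPathQ T u) Q where
  onV p := p.1.1
  onE y := y.1.1
  hs _ := rfl
  ht y := y.2.2.2

/-! ## Fiber products -/

/-- The fiber product of two quivers over `Q`. -/
def Fib {Q Q' Q'' : BQuiv} (f' : Hom Q' Q) (f'' : Hom Q'' Q) : BQuiv where
  V := {p : Q'.V × Q''.V // f'.onV p.1 = f''.onV p.2}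
  E := {e : Q'.E × Q''.E // f'.onE e.1 = f''.onE e.2}
  s e := ⟨(Q'.s e.1.1, Q''.s e.1.2), by rw [← f'.hs, ← f''.hs, e.2]⟩
  t e := ⟨(Q'.t e.1.1, Q''.t e.1.2), by rw [← f'.ht, ← f''.ht, e.2]⟩

/-- The structure map of the fiber product as a quiver over `Q`. -/
def fibHom {Q Q' Q'' : BQuiv} (f' : Hom Q' Q) (f'' : Hom Q'' Q) : Hom (Fib f' f'') Q where
  onV p := f'.onV p.1.1
  onE e := f'.onE e.1.1
  hs e := f'.hs e.1.1
  ht e := f'.ht e.1.1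

/-! ## Connected components -/

/-- Adjacency in the underlying undirected graph. -/
def Adj (X : BQuiv) (v w : X.V) : Prop :=
  ∃ e : X.E, (X.s e = v ∧ X.t e = w) ∨ (X.s e = w ∧ X.t e = v)

/-- Connectivity in the underlying undirected graph. -/
def Conn (X : BQuiv) : X.V → X.V → Prop :=
  Relation.ReflTransGen (Adj X)

/-- The connected component of the vertex `v₀` in `X`, as a quiver. -/
def Component (X : BQuiv) (v₀ : X.V) : BQuiv where
  V := {v : X.V // Conn X v₀ v}
  E := {e : X.E // Conn X v₀ (X.s e)}
  s e := ⟨X.s e.1, e.2⟩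
  t e := ⟨X.t e.1, e.2.tail ⟨e.1, Or.inl ⟨rfl, rfl⟩⟩⟩

/-- The inclusion of a connected component. -/
def Component.incl (X : BQuiv) (v₀ : X.V) : Hom (Component X v₀) X where
  onV := Subtype.val
  onE := Subtype.val
  hs _ := rfl
  ht _ := rfl

/-- A connected component of a quiver over `Q`, regarded as a quiver over `Q` via the
restricted structure map. -/
def componentHom {X Q : BQuiv} (h : Hom X Q) (v₀ : X.V) : Hom (Component X v₀) Q :=
  (Component.incl X v₀).comp h

/-! ## Isomorphisms over `Q` and wrappings -/

/-- An isomorphism of quivers over `Q`: a morphism of quivers commuting with the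
structure maps which is bijective on vertices and on arrows. -/
structure OverIso {A B Q : BQuiv} (f : Hom A Q) (g : Hom B Q) where
  hom : Hom A B
  comm : hom.comp g = f
  bijV : Function.Bijective hom.onV
  bijE : Function.Bijective hom.onE

/-- A morphism of quivers is a wrapping if it is injective on parallel arrows. -/
def IsWrapping {A B : BQuiv} (f : Hom A B) : Prop :=
  ∀ e₁ e₂ : A.E, A.s e₁ = A.s e₂ → A.t e₁ = A.t e₂ → f.onE e₁ = f.onE e₂ → e₁ = e₂

/-! ## Linear quivers tracing a path -/

/-- The linear quiver with vertices `0, 1, …, n` and one arrow `k-1 ⟶ k` for `1 ≤ k ≤ n`. -/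
def LinQ (n : ℕ) : BQuiv where
  V := Fin (n + 1)
  E := Fin n
  s := Fin.castSucc
  t := Fin.succ

/-- The vertex reached after `k` steps along a list of edges starting at `a`. -/
def vertAt (Q : BQuiv) : Q.V → List Q.E → ℕ → Q.V
  | a, _, 0 => a
  | a, [], _ + 1 => a
  | _, e :: es, k + 1 => vertAt Q (Q.t e) es k

theorem vertAt_s {Q : BQuiv} {a b : Q.V} {es : List Q.E} (h : Q.IsPathFrom a b es)
    (k : Fin es.length) : Q.s (es.get k) = vertAt Q a es k.1 := by
  induction es generalizing a with
  | nil => exact absurd k.2 (by simp)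
  | cons e es ih =>
      obtain ⟨h1, h2⟩ := h
      rcases k with ⟨k, hk⟩
      cases k with
      | zero => exact h1
      | succ k => exact ih h2 ⟨k, Nat.lt_of_succ_lt_succ hk⟩

theorem vertAt_t {Q : BQuiv} {a b : Q.V} {es : List Q.E} (h : Q.IsPathFrom a b es)
    (k : Fin es.length) : Q.t (es.get k) = vertAt Q a es (k.1 + 1) := by
  induction es generalizing a with
  | nil => exact absurd k.2 (by simp)
  | cons e es ih =>
      obtain ⟨h1, h2⟩ := h
      rcases k with ⟨k, hk⟩
      cases k with
      | zero =>
          cases es with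
          | nil => rfl
          | cons f fs => exact (vertAt_s h2 ⟨0, by simp⟩) ▸ (h2.1).symm ▸ rfl
      | succ k => exact ih h2 ⟨k, Nat.lt_of_succ_lt_succ hk⟩

/-- The linear quiver of length `es.length` tracing the path `es` from `a` to `b`,
as a quiver over `Q`. -/
def traceHom (Q : BQuiv) (a b : Q.V) (es : List Q.E) (h : Q.IsPathFrom a b es) :
    Hom (LinQ es.length) Q where
  onV k := vertAt Q a es k.1
  onE k := es.get k
  hs k := vertAt_s h k
  ht k := vertAt_t h k

end BQuiv

open BQuiv

namespace BQuiv

section Statement15Aux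

/-! ### Longest common prefix of lists -/

open Classical in
/-- Longest common prefix of two lists. -/
noncomputable def lcp {α : Type} : List α → List α → List α
  | a :: as, b :: bs => if a = b then a :: lcp as bs else []
  | _, _ => []

theorem lcp_nil_left {α : Type} (bs : List α) : lcp ([] : List α) bs = [] := by
  cases bs <;> rfl

theorem lcp_nil_right {α : Type} (as : List α) : lcp as ([] : List α) = [] := by
  cases as <;> rfl

theorem lcp_cons {α : Type} (a : α) (as bs : List α) :
    lcp (a :: as) (a :: bs) = a :: lcp as bs := by
  simp [lcp]

theorem lcp_prefix_left {α : Type} : ∀ as bs : List α, lcp as bs <+: as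
  | [], bs => by simp [lcp_nil_left]
  | a :: as, [] => by simp [lcp_nil_right]
  | a :: as, b :: bs => by
      by_cases h : a = b
      · subst h
        rw [lcp_cons]
        obtain ⟨t, ht⟩ := lcp_prefix_left as bs
        exact ⟨t, by rw [List.cons_append, ht]⟩
      · simp [lcp, h]

theorem lcp_prefix_right {α : Type} : ∀ as bs : List α, lcp as bs <+: bs
  | [], bs => by simp [lcp_nil_left]
  | a :: as, [] => by simp [lcp_nil_right]
  | a :: as, b :: bs => by
      by_cases h : a = b
      · subst h
        rw [lcp_cons]
        obtain ⟨t, ht⟩ := lcp_prefix_right as bs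
        exact ⟨t, by rw [List.cons_append, ht]⟩
      · simp [lcp, h]

theorem lcp_append {α : Type} (c as bs : List α) :
    lcp (c ++ as) (c ++ bs) = c ++ lcp as bs := by
  induction c with
  | nil => rfl
  | cons a c ih => simpa [lcp_cons] using ih

theorem lcp_drop {α : Type} :
    ∀ as bs : List α,
      lcp (as.drop (lcp as bs).length) (bs.drop (lcp as bs).length) = []
  | [], bs => by simp [lcp_nil_left]
  | a :: as, [] => by
      rw [lcp_nil_right]
      simp [lcp_nil_right]
  | a :: as, b :: bs => by
      by_cases h : a = b
      · subst h
        rw [lcp_cons]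
        simpa using lcp_drop as bs
      · have h0 : lcp (a :: as) (b :: bs) = [] := by simp [lcp, h]
        simp only [h0, List.length_nil, List.drop_zero]

theorem lcp_decomp_left {α : Type} (as bs : List α) :
    as = lcp as bs ++ as.drop (lcp as bs).length := by
  obtain ⟨t, ht⟩ := lcp_prefix_left as bs
  have hd : as.drop (lcp as bs).length = t := by
    have h2 := congrArg (List.drop (lcp as bs).length) ht
    rw [List.drop_left] at h2
    exact h2.symm
  rw [hd]
  exact ht.symm

theorem lcp_decomp_right {α : Type} (as bs : List α) :
    bs = lcp as bs ++ bs.drop (lcp as bs).length := by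
  obtain ⟨t, ht⟩ := lcp_prefix_right as bs
  have hd : bs.drop (lcp as bs).length = t := by
    have h2 := congrArg (List.drop (lcp as bs).length) ht
    rw [List.drop_left] at h2
    exact h2.symm
  rw [hd]
  exact ht.symm

theorem lcp_snoc {α : Type} (p q : List α) (e : α) :
    (lcp (p ++ [e]).reverse (q ++ [e]).reverse).reverse
      = (lcp p.reverse q.reverse).reverse ++ [e] := by
  have h1 : (p ++ [e]).reverse = e :: p.reverse := by simp
  have h2 : (q ++ [e]).reverse = e :: q.reverse := by simp
  rw [h1, h2, lcp_cons, List.reverse_cons]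

/-! ### Generalities on paths -/

variable {Q : BQuiv}

theorem isPathFrom_nil (a : Q.V) : Q.IsPathFrom a a [] := rfl

theorem isPathFrom_split {a c : Q.V} {es fs : List Q.E}
    (h : Q.IsPathFrom a c (es ++ fs)) :
    ∃ b, Q.IsPathFrom a b es ∧ Q.IsPathFrom b c fs := by
  induction es generalizing a with
  | nil => exact ⟨a, isPathFrom_nil a, h⟩
  | cons e es ih =>
      obtain ⟨h1, h2⟩ := h
      obtain ⟨b, h3, h4⟩ := ih h2
      exact ⟨b, ⟨h1, h3⟩, h4⟩

/-- The starting point of a path, recomputed from its endpoint and edges. -/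
def startOf (Q : BQuiv) (v : Q.V) : List Q.E → Q.V
  | [] => v
  | e :: _ => Q.s e

theorem isPathFrom_start {b c : Q.V} {es : List Q.E} (h : Q.IsPathFrom b c es) :
    b = Q.startOf c es := by
  cases es with
  | nil => exact h
  | cons e es => exact h.1.symm

theorem pathIn_end_mem {S : Sub Q} : ∀ {es : List Q.E} {a b : Q.V},
    S.IsPathIn a b es → b ∈ S.verts := by
  intro es
  induction es with
  | nil =>
      rintro a b ⟨ha, hp, -⟩
      have h : a = b := hp
      exact h ▸ ha
  | cons e es ih =>
      rintro a b ⟨ha, ⟨h1, h2⟩, he⟩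
      exact ih ⟨S.tgt_mem e (he e (List.mem_cons_self)), h2,
        fun f hf => he f (List.mem_cons_of_mem _ hf)⟩

theorem pathIn_snoc {U : Sub Q} {a b : Q.V} {es : List Q.E}
    (h : U.IsPathIn a b es) {e : Q.E} (he : e ∈ U.edges) (hse : Q.s e = b) :
    U.IsPathIn a (Q.t e) (es ++ [e]) := by
  refine ⟨h.1, h.2.1.snoc hse, fun f hf => ?_⟩
  rcases List.mem_append.mp hf with h' | h'
  · exact h.2.2 f h'
  · rw [List.mem_singleton.mp h']; exact he

theorem succClosure_edges {U : Sub Q} {j : Q.V} :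
    ∀ (es : List Q.E) (a v : Q.V) (pref : List Q.E),
      U.IsPathIn j a pref → Q.IsPathFrom a v es → (∀ e ∈ es, e ∈ U.edges) →
      ∀ e ∈ es, e ∈ (succClosure U j).edges := by
  intro es
  induction es with
  | nil => intro a v pref _ _ _ e he; exact absurd he List.not_mem_nil
  | cons f fs ih =>
      intro a v pref hpref hpath hes e he
      obtain ⟨h1, h2⟩ := hpath
      have hfU : f ∈ U.edges := hes f (List.mem_cons_self)
      have hpref' : U.IsPathIn j (Q.s f) pref := by rw [h1]; exact hpref
      have hpref'' : U.IsPathIn j (Q.t f) (pref ++ [f]) := pathIn_snoc hpref' hfU rfl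
      rcases List.mem_cons.mp he with h | h
      · subst h
        exact ⟨hfU, ⟨pref, hpref'⟩, ⟨pref ++ [e], hpref''⟩⟩
      · exact ih (Q.t f) v (pref ++ [f]) hpref'' h2
          (fun x hx => hes x (List.mem_cons_of_mem _ hx)) e h

theorem succClosure_lift {U : Sub Q} {j : Q.V} {es : List Q.E} {v : Q.V}
    (h : U.IsPathIn j v es) : (succClosure U j).IsPathIn j v es := by
  have hj : j ∈ (succClosure U j).verts := ⟨[], h.1, isPathFrom_nil j, by simp⟩
  exact ⟨hj, h.2.1,
    succClosure_edges es j v [] ⟨h.1, isPathFrom_nil j, by simp⟩ h.2.1 h.2.2⟩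

end Statement15Aux

end BQuiv

namespace BQuiv

section Statement15Fib

variable {Q : BQuiv} {S T : Sub Q} {s₀ t₀ : Q.V}

/-- The common endpoint of a vertex of the fiber product. -/
def vxx (x : (Fib (pathPi S s₀) (pathPi T t₀)).V) : Q.V := x.1.1.1.1

/-- The `S`-path of a vertex of the fiber product. -/
def pxx (x : (Fib (pathPi S s₀) (pathPi T t₀)).V) : List Q.E := x.1.1.1.2

/-- The `T`-path of a vertex of the fiber product. -/
def qxx (x : (Fib (pathPi S s₀) (pathPi T t₀)).V) : List Q.E := x.1.2.1.2

/-- The `Q`-edge of an edge of the fiber product. -/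
def eEE (ε : (Fib (pathPi S s₀) (pathPi T t₀)).E) : Q.E := ε.1.1.1.2

theorem hpxx (x : (Fib (pathPi S s₀) (pathPi T t₀)).V) :
    S.IsPathIn s₀ (vxx x) (pxx x) := x.1.1.2

theorem hqxx (x : (Fib (pathPi S s₀) (pathPi T t₀)).V) :
    T.IsPathIn t₀ (vxx x) (qxx x) := by
  have h : vxx x = x.1.2.1.1 := x.2
  rw [h]
  exact x.1.2.2

/-- Constructor for vertices of the fiber product. -/
def mkFV (v : Q.V) (p q : List Q.E) (hp : S.IsPathIn s₀ v p) (hq : T.IsPathIn t₀ v q) :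
    (Fib (pathPi S s₀) (pathPi T t₀)).V :=
  ⟨(⟨(v, p), hp⟩, ⟨(v, q), hq⟩), rfl⟩

theorem FV_ext {x y : (Fib (pathPi S s₀) (pathPi T t₀)).V}
    (hv : vxx x = vxx y) (hp : pxx x = pxx y) (hq : qxx x = qxx y) : x = y := by
  obtain ⟨⟨⟨⟨v1, p1⟩, hp1⟩, ⟨⟨w1, q1⟩, hq1⟩⟩, h1⟩ := x
  obtain ⟨⟨⟨⟨v2, p2⟩, hp2⟩, ⟨⟨w2, q2⟩, hq2⟩⟩, h2⟩ := y
  have hv' : v1 = v2 := hv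
  have hp' : p1 = p2 := hp
  have hq' : q1 = q2 := hq
  subst hv'; subst hp'; subst hq'
  have hw : w1 = w2 := by
    have e1 : v1 = w1 := h1
    have e2 : v1 = w2 := h2
    exact e1.symm.trans e2
  subst hw
  rfl

/-- Constructor for edges of the fiber product. -/
def mkFE (x : (Fib (pathPi S s₀) (pathPi T t₀)).V) (e : Q.E)
    (heS : e ∈ S.edges) (heT : e ∈ T.edges) (hse : Q.s e = vxx x) :
    (Fib (pathPi S s₀) (pathPi T t₀)).E :=
  ⟨(⟨((vxx x, pxx x), e), ⟨hpxx x, heS, hse⟩⟩,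
    ⟨((vxx x, qxx x), e), ⟨hqxx x, heT, hse⟩⟩), rfl⟩

theorem s_mkFE (x : (Fib (pathPi S s₀) (pathPi T t₀)).V) (e : Q.E)
    (heS : e ∈ S.edges) (heT : e ∈ T.edges) (hse : Q.s e = vxx x) :
    (Fib (pathPi S s₀) (pathPi T t₀)).s (mkFE x e heS heT hse) = x :=
  FV_ext rfl rfl rfl

theorem edge_destruct (ε : (Fib (pathPi S s₀) (pathPi T t₀)).E) :
    ∃ x e heS heT hse, ε = mkFE x e heS heT hse := by
  obtain ⟨⟨⟨⟨⟨v, p⟩, α⟩, h1⟩, ⟨⟨⟨w, q⟩, β⟩, h2⟩⟩, h3⟩ := ε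
  have hβ : β = α := by
    have h3' : α = β := h3
    exact h3'.symm
  subst hβ
  have hw : w = v := by
    have e2 : Q.s β = w := h2.2.2
    have e1 : Q.s β = v := h1.2.2
    rw [← e2, e1]
  subst hw
  exact ⟨⟨(⟨(w, p), h1.1⟩, ⟨(w, q), h2.1⟩), rfl⟩, β, h1.2.1, h2.2.1, h1.2.2, rfl⟩

theorem FE_ext {ε ε' : (Fib (pathPi S s₀) (pathPi T t₀)).E}
    (hs : (Fib (pathPi S s₀) (pathPi T t₀)).s ε = (Fib (pathPi S s₀) (pathPi T t₀)).s ε')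
    (he : eEE ε = eEE ε') : ε = ε' := by
  obtain ⟨⟨⟨⟨⟨v, p⟩, α⟩, h1⟩, ⟨⟨⟨w, q⟩, β⟩, h2⟩⟩, h3⟩ := ε
  obtain ⟨⟨⟨⟨⟨v', p'⟩, α'⟩, h1'⟩, ⟨⟨⟨w', q'⟩, β'⟩, h2'⟩⟩, h3'⟩ := ε'
  have hα : α = α' := he
  have hv : v = v' := congrArg vxx hs
  have hp : p = p' := congrArg pxx hs
  have hq : q = q' := congrArg qxx hs
  have hw : w = w' := congrArg (fun z => z.1.2.1.1) hs
  have hβ : β = β' := by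
    have e1 : α = β := h3
    have e2 : α' = β' := h3'
    rw [← e1, ← e2, hα]
  subst hα; subst hv; subst hp; subst hq; subst hw; subst hβ
  rfl

theorem eEE_mem_S (η : (Fib (pathPi S s₀) (pathPi T t₀)).E) : eEE η ∈ S.edges :=
  η.1.1.2.2.1

theorem eEE_mem_T (η : (Fib (pathPi S s₀) (pathPi T t₀)).E) : eEE η ∈ T.edges := by
  have h : η.1.1.1.2 = η.1.2.1.2 := η.2
  show η.1.1.1.2 ∈ T.edges
  rw [h]
  exact η.1.2.2.2.1

theorem eEE_src (η : (Fib (pathPi S s₀) (pathPi T t₀)).E) :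
    Q.s (eEE η) = vxx ((Fib (pathPi S s₀) (pathPi T t₀)).s η) :=
  η.1.1.2.2.2

/-! ### The root of a fiber-product vertex -/

/-- Common suffix of the two paths. -/
noncomputable def uxx (x : (Fib (pathPi S s₀) (pathPi T t₀)).V) : List Q.E :=
  (lcp (pxx x).reverse (qxx x).reverse).reverse

/-- The reduced `S`-path. -/
noncomputable def rpxx (x : (Fib (pathPi S s₀) (pathPi T t₀)).V) : List Q.E :=
  ((pxx x).reverse.drop (lcp (pxx x).reverse (qxx x).reverse).length).reverse

/-- The reduced `T`-path. -/
noncomputable def rqxx (x : (Fib (pathPi S s₀) (pathPi T t₀)).V) : List Q.E :=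
  ((qxx x).reverse.drop (lcp (pxx x).reverse (qxx x).reverse).length).reverse

/-- The starting vertex of the common suffix. -/
noncomputable def jxx (x : (Fib (pathPi S s₀) (pathPi T t₀)).V) : Q.V :=
  Q.startOf (vxx x) (uxx x)

theorem pxx_decomp (x : (Fib (pathPi S s₀) (pathPi T t₀)).V) :
    pxx x = rpxx x ++ uxx x := by
  have h := lcp_decomp_left (pxx x).reverse (qxx x).reverse
  have h2 := congrArg List.reverse h
  rwa [List.reverse_reverse, List.reverse_append] at h2

theorem qxx_decomp (x : (Fib (pathPi S s₀) (pathPi T t₀)).V) :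
    qxx x = rqxx x ++ uxx x := by
  have h := lcp_decomp_right (pxx x).reverse (qxx x).reverse
  have h2 := congrArg List.reverse h
  rwa [List.reverse_reverse, List.reverse_append] at h2

theorem split_pxx (x : (Fib (pathPi S s₀) (pathPi T t₀)).V) :
    Q.IsPathFrom s₀ (jxx x) (rpxx x) ∧ Q.IsPathFrom (jxx x) (vxx x) (uxx x) := by
  have h := (hpxx x).2.1
  rw [pxx_decomp x] at h
  obtain ⟨c, h1, h2⟩ := isPathFrom_split h
  have hc : c = jxx x := isPathFrom_start h2
  rw [hc] at h1 h2
  exact ⟨h1, h2⟩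

theorem split_qxx (x : (Fib (pathPi S s₀) (pathPi T t₀)).V) :
    Q.IsPathFrom t₀ (jxx x) (rqxx x) := by
  have h := (hqxx x).2.1
  rw [qxx_decomp x] at h
  obtain ⟨c, h1, h2⟩ := isPathFrom_split h
  have hc : c = jxx x := isPathFrom_start h2
  rw [hc] at h1
  exact h1

theorem uxx_sub_S (x : (Fib (pathPi S s₀) (pathPi T t₀)).V) :
    ∀ e ∈ uxx x, e ∈ S.edges :=
  fun e he => (hpxx x).2.2 e (by rw [pxx_decomp x]; exact List.mem_append_right _ he)

theorem uxx_sub_T (x : (Fib (pathPi S s₀) (pathPi T t₀)).V) :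
    ∀ e ∈ uxx x, e ∈ T.edges :=
  fun e he => (hqxx x).2.2 e (by rw [qxx_decomp x]; exact List.mem_append_right _ he)

/-- The root of a fiber-product vertex: strip the common suffix. -/
noncomputable def rootx (x : (Fib (pathPi S s₀) (pathPi T t₀)).V) :
    (Fib (pathPi S s₀) (pathPi T t₀)).V :=
  mkFV (jxx x) (rpxx x) (rqxx x)
    ⟨(hpxx x).1, (split_pxx x).1,
      fun e he => (hpxx x).2.2 e (by rw [pxx_decomp x]; exact List.mem_append_left _ he)⟩
    ⟨(hqxx x).1, split_qxx x,
      fun e he => (hqxx x).2.2 e (by rw [qxx_decomp x]; exact List.mem_append_left _ he)⟩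

theorem root_t_mkFE (x : (Fib (pathPi S s₀) (pathPi T t₀)).V) (e : Q.E)
    (heS : e ∈ S.edges) (heT : e ∈ T.edges) (hse : Q.s e = vxx x) :
    rootx ((Fib (pathPi S s₀) (pathPi T t₀)).t (mkFE x e heS heT hse)) = rootx x := by
  have h1 : (pxx x ++ [e]).reverse = e :: (pxx x).reverse := by simp
  have h2 : (qxx x ++ [e]).reverse = e :: (qxx x).reverse := by simp
  have hu : uxx ((Fib (pathPi S s₀) (pathPi T t₀)).t (mkFE x e heS heT hse))
      = uxx x ++ [e] := lcp_snoc (pxx x) (qxx x) e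
  apply FV_ext
  · show jxx ((Fib (pathPi S s₀) (pathPi T t₀)).t (mkFE x e heS heT hse)) = jxx x
    have hpath : Q.IsPathFrom (jxx x) (Q.t e) (uxx x ++ [e]) :=
      (split_pxx x).2.snoc hse
    rw [← hu] at hpath
    exact (isPathFrom_start hpath).symm
  · show ((pxx x ++ [e]).reverse.drop
        (lcp (pxx x ++ [e]).reverse (qxx x ++ [e]).reverse).length).reverse = rpxx x
    rw [h1, h2, lcp_cons]
    simp only [List.length_cons, List.drop_succ_cons]
    rfl
  · show ((qxx x ++ [e]).reverse.drop
        (lcp (pxx x ++ [e]).reverse (qxx x ++ [e]).reverse).length).reverse = rqxx x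
    rw [h1, h2, lcp_cons]
    simp only [List.length_cons, List.drop_succ_cons]
    rfl

theorem root_adj {x y : (Fib (pathPi S s₀) (pathPi T t₀)).V}
    (h : Adj (Fib (pathPi S s₀) (pathPi T t₀)) x y) : rootx x = rootx y := by
  obtain ⟨ε, h | h⟩ := h
  · obtain ⟨z, e, heS, heT, hse, rfl⟩ := edge_destruct ε
    obtain ⟨hx, hy⟩ := h
    rw [← hx, ← hy, s_mkFE, root_t_mkFE]
  · obtain ⟨z, e, heS, heT, hse, rfl⟩ := edge_destruct ε
    obtain ⟨hy, hx⟩ := h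
    rw [← hx, ← hy, s_mkFE, root_t_mkFE]

theorem root_conn {x y : (Fib (pathPi S s₀) (pathPi T t₀)).V}
    (h : Conn (Fib (pathPi S s₀) (pathPi T t₀)) x y) : rootx x = rootx y := by
  induction h with
  | refl => rfl
  | tail _ h ih => exact ih.trans (root_adj h)

theorem adj_symm {X : BQuiv} {x y : X.V} (h : Adj X x y) : Adj X y x := by
  obtain ⟨e, h | h⟩ := h
  · exact ⟨e, Or.inr h⟩
  · exact ⟨e, Or.inl h⟩

theorem conn_symm {X : BQuiv} {x y : X.V} (h : Conn X x y) : Conn X y x := by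
  induction h with
  | refl => exact Relation.ReflTransGen.refl
  | tail _ h ih => exact Relation.ReflTransGen.head (adj_symm h) ih

theorem conn_extend :
    ∀ (u : List Q.E) (y x : (Fib (pathPi S s₀) (pathPi T t₀)).V),
      pxx x = pxx y ++ u → qxx x = qxx y ++ u → Q.IsPathFrom (vxx y) (vxx x) u →
      Conn (Fib (pathPi S s₀) (pathPi T t₀)) y x := by
  intro u
  induction u with
  | nil =>
      intro y x hp hq hv
      have hv' : vxx y = vxx x := hv
      have hx : y = x := FV_ext hv' (by rw [hp, List.append_nil]) (by rw [hq, List.append_nil])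
      exact hx ▸ Relation.ReflTransGen.refl
  | cons e u ih =>
      intro y x hp hq hv
      obtain ⟨h1, h2⟩ := hv
      have heS : e ∈ S.edges := (hpxx x).2.2 e
        (by rw [hp]; exact List.mem_append_right _ (List.mem_cons_self))
      have heT : e ∈ T.edges := (hqxx x).2.2 e
        (by rw [hq]; exact List.mem_append_right _ (List.mem_cons_self))
      have hadj : Adj (Fib (pathPi S s₀) (pathPi T t₀)) y
          ((Fib (pathPi S s₀) (pathPi T t₀)).t (mkFE y e heS heT h1)) :=
        ⟨mkFE y e heS heT h1, Or.inl ⟨s_mkFE y e heS heT h1, rfl⟩⟩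
      refine Relation.ReflTransGen.head hadj (ih _ x ?_ ?_ h2)
      · show pxx x = (pxx y ++ [e]) ++ u
        rw [hp]; simp
      · show qxx x = (qxx y ++ [e]) ++ u
        rw [hq]; simp

theorem conn_root (x : (Fib (pathPi S s₀) (pathPi T t₀)).V) :
    Conn (Fib (pathPi S s₀) (pathPi T t₀)) (rootx x) x :=
  conn_extend (uxx x) (rootx x) x (pxx_decomp x) (qxx_decomp x) ((split_pxx x).2)

theorem conn_iff_root {x y : (Fib (pathPi S s₀) (pathPi T t₀)).V} :
    Conn (Fib (pathPi S s₀) (pathPi T t₀)) x y ↔ rootx x = rootx y :=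
  ⟨root_conn, fun h => (conn_symm (conn_root x)).trans (h ▸ conn_root y)⟩

theorem lcp_root (x : (Fib (pathPi S s₀) (pathPi T t₀)).V) :
    lcp (pxx (rootx x)).reverse (qxx (rootx x)).reverse = [] := by
  show lcp (rpxx x).reverse (rqxx x).reverse = []
  unfold rpxx rqxx
  rw [List.reverse_reverse, List.reverse_reverse]
  exact lcp_drop (pxx x).reverse (qxx x).reverse

theorem calc_ext (r : (Fib (pathPi S s₀) (pathPi T t₀)).V)
    (hr : lcp (pxx r).reverse (qxx r).reverse = []) (u : List Q.E)
    (x : (Fib (pathPi S s₀) (pathPi T t₀)).V)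
    (hp : pxx x = pxx r ++ u) (hq : qxx x = qxx r ++ u)
    (hvp : Q.IsPathFrom (vxx r) (vxx x) u) :
    uxx x = u ∧ rootx x = r := by
  have hl : lcp (pxx x).reverse (qxx x).reverse = u.reverse := by
    rw [hp, hq, List.reverse_append, List.reverse_append, lcp_append, hr, List.append_nil]
  have hux : uxx x = u := by
    show (lcp (pxx x).reverse (qxx x).reverse).reverse = u
    rw [hl, List.reverse_reverse]
  refine ⟨hux, FV_ext ?_ ?_ ?_⟩
  · show jxx x = vxx r
    have hpath : Q.IsPathFrom (vxx r) (vxx x) (uxx x) := by rw [hux]; exact hvp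
    exact (isPathFrom_start hpath).symm
  · show ((pxx x).reverse.drop (lcp (pxx x).reverse (qxx x).reverse).length).reverse
      = pxx r
    rw [hl, hp, List.reverse_append, List.drop_left, List.reverse_reverse]
  · show ((qxx x).reverse.drop (lcp (pxx x).reverse (qxx x).reverse).length).reverse
      = qxx r
    rw [hl, hq, List.reverse_append, List.drop_left, List.reverse_reverse]

end Statement15Fib

end BQuiv


/-- Every connected component of the fiber product `P_{S,s₀} ×_Q
P_{T,t₀}` is isomorphic over `Q` to a path quiver `P_{W,j}`, where `j` is a source of the
subquiver `W` from which every vertex of `W` is reachable in `W`. -/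
theorem component_pathQuiver_prod_pathQuiver
    (Q : BQuiv) [Fintype Q.V] [Fintype Q.E] (hQ : Q.IsAcyclic)
    (S T : Sub Q) (s₀ t₀ : Q.V)
    (hS : S.IsUniqueSource s₀) (hT : T.IsUniqueSource t₀) :
    ∀ v₀ : (Fib (pathPi S s₀) (pathPi T t₀)).V,
      ∃ (W : Sub Q) (j : Q.V), j ∈ W.verts ∧
        (∀ e ∈ W.edges, Q.t e ≠ j) ∧
        (∀ v ∈ W.verts, ∃ es, W.IsPathIn j v es) ∧
        Nonempty (OverIso (componentHom (fibHom (pathPi S s₀) (pathPi T t₀)) v₀)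
          (pathPi W j)) := by
  intro v₀
  have hjS : jxx v₀ ∈ S.verts := pathIn_end_mem (hpxx (rootx v₀))
  have hjT : jxx v₀ ∈ T.verts := pathIn_end_mem (hqxx (rootx v₀))
  have hjU : jxx v₀ ∈ (S.inter T).verts := ⟨hjS, hjT⟩
  have keyU : ∀ x, rootx x = rootx v₀ →
      (S.inter T).IsPathIn (jxx v₀) (vxx x) (uxx x) := by
    intro x hx
    have hj : jxx x = jxx v₀ := congrArg vxx hx
    refine ⟨hjU, ?_, fun e he => ⟨uxx_sub_S x e he, uxx_sub_T x e he⟩⟩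
    rw [← hj]
    exact (split_pxx x).2
  have keyW : ∀ x, rootx x = rootx v₀ →
      (succClosure (S.inter T) (jxx v₀)).IsPathIn (jxx v₀) (vxx x) (uxx x) :=
    fun x hx => succClosure_lift (keyU x hx)
  have injcore : ∀ x x' : (Fib (pathPi S s₀) (pathPi T t₀)).V,
      Conn (Fib (pathPi S s₀) (pathPi T t₀)) v₀ x →
      Conn (Fib (pathPi S s₀) (pathPi T t₀)) v₀ x' →
      vxx x = vxx x' → uxx x = uxx x' → x = x' := by
    intro x x' hcx hcx' hv hu
    have hr : rootx x = rootx x' := (root_conn hcx).symm.trans (root_conn hcx')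
    refine FV_ext hv ?_ ?_
    · rw [pxx_decomp x, pxx_decomp x', hu]
      congr 1
      exact congrArg pxx hr
    · rw [qxx_decomp x, qxx_decomp x', hu]
      congr 1
      exact congrArg qxx hr
  have surjcore : ∀ (v : Q.V) (u : List Q.E),
      (succClosure (S.inter T) (jxx v₀)).IsPathIn (jxx v₀) v u →
      ∃ x : (Fib (pathPi S s₀) (pathPi T t₀)).V,
        Conn (Fib (pathPi S s₀) (pathPi T t₀)) v₀ x ∧ vxx x = v ∧ uxx x = u := by
    intro v u hz
    have hupath : Q.IsPathFrom (vxx (rootx v₀)) v u := hz.2.1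
    have huU : ∀ e ∈ u, e ∈ (S.inter T).edges := fun e he => (hz.2.2 e he).1
    have hp : S.IsPathIn s₀ v (pxx (rootx v₀) ++ u) := by
      refine ⟨(hpxx (rootx v₀)).1, (hpxx (rootx v₀)).2.1.append hupath, fun e he => ?_⟩
      rcases List.mem_append.mp he with h | h
      · exact (hpxx (rootx v₀)).2.2 e h
      · exact (huU e h).1
    have hq : T.IsPathIn t₀ v (qxx (rootx v₀) ++ u) := by
      refine ⟨(hqxx (rootx v₀)).1, (hqxx (rootx v₀)).2.1.append hupath, fun e he => ?_⟩
      rcases List.mem_append.mp he with h | h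
      · exact (hqxx (rootx v₀)).2.2 e h
      · exact (huU e h).2
    have hc := calc_ext (rootx v₀) (lcp_root v₀) u
      (mkFV v (pxx (rootx v₀) ++ u) (qxx (rootx v₀) ++ u) hp hq) rfl rfl hupath
    exact ⟨mkFV v (pxx (rootx v₀) ++ u) (qxx (rootx v₀) ++ u) hp hq,
      conn_iff_root.mpr hc.2.symm, rfl, hc.1⟩
  refine ⟨succClosure (S.inter T) (jxx v₀), jxx v₀, ?_, ?_, ?_, ?_⟩
  · exact ⟨[], hjU, isPathFrom_nil _, by simp⟩
  · intro e he hte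
    obtain ⟨heU, ⟨es, hes⟩, -⟩ := he
    have hpath : Q.IsPathFrom (jxx v₀) (Q.t e) (es ++ [e]) := hes.2.1.snoc rfl
    rw [hte] at hpath
    have := hQ _ _ hpath
    simp at this
  · intro v hv
    obtain ⟨es, hes⟩ := hv
    exact ⟨es, succClosure_lift hes⟩
  · refine ⟨{
      hom := {
        onV := fun y => ⟨(vxx y.1, uxx y.1), keyW y.1 (root_conn y.2).symm⟩
        onE := fun ε =>
          ⟨((vxx ((Fib (pathPi S s₀) (pathPi T t₀)).s ε.1),
             uxx ((Fib (pathPi S s₀) (pathPi T t₀)).s ε.1)), eEE ε.1), by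
            refine ⟨keyW _ (root_conn ε.2).symm,
              ⟨⟨eEE_mem_S ε.1, eEE_mem_T ε.1⟩, ?_, ?_⟩, eEE_src ε.1⟩
            · refine ⟨uxx ((Fib (pathPi S s₀) (pathPi T t₀)).s ε.1), ?_⟩
              rw [eEE_src ε.1]
              exact keyU _ (root_conn ε.2).symm
            · refine ⟨uxx ((Fib (pathPi S s₀) (pathPi T t₀)).s ε.1) ++ [eEE ε.1], ?_⟩
              exact pathIn_snoc (keyU _ (root_conn ε.2).symm)
                ⟨eEE_mem_S ε.1, eEE_mem_T ε.1⟩ (eEE_src ε.1)⟩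
        hs := fun ε => Subtype.ext rfl
        ht := fun ε => by
          obtain ⟨⟨⟨⟨⟨⟨v, p⟩, α⟩, h1⟩, ⟨⟨⟨w, q⟩, β⟩, h2⟩⟩, h3⟩, hc⟩ := ε
          have hβ : β = α := by
            have h3' : α = β := h3
            exact h3'.symm
          subst hβ
          apply Subtype.ext
          show (Q.t β, (lcp p.reverse q.reverse).reverse ++ [β])
              = (Q.t β, (lcp (p ++ [β]).reverse (q ++ [β]).reverse).reverse)
          rw [lcp_snoc] }
      comm := Hom.ext rfl rfl
      bijV := ⟨?_, ?_⟩
      bijE := ⟨?_, ?_⟩ }⟩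
    · intro y y' h
      have hv : vxx y.1 = vxx y'.1 := congrArg (fun z => z.1.1) h
      have hu : uxx y.1 = uxx y'.1 := congrArg (fun z => z.1.2) h
      exact Subtype.ext (injcore y.1 y'.1 y.2 y'.2 hv hu)
    · rintro ⟨⟨v, u⟩, hz⟩
      obtain ⟨x, hcx, hvx, hux⟩ := surjcore v u hz
      refine ⟨⟨x, hcx⟩, Subtype.ext ?_⟩
      show (vxx x, uxx x) = (v, u)
      rw [hvx, hux]
    · intro ε ε' h
      have hv : vxx ((Fib (pathPi S s₀) (pathPi T t₀)).s ε.1)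
          = vxx ((Fib (pathPi S s₀) (pathPi T t₀)).s ε'.1) :=
        congrArg (fun z => z.1.1.1) h
      have hu : uxx ((Fib (pathPi S s₀) (pathPi T t₀)).s ε.1)
          = uxx ((Fib (pathPi S s₀) (pathPi T t₀)).s ε'.1) :=
        congrArg (fun z => z.1.1.2) h
      have he : eEE ε.1 = eEE ε'.1 := congrArg (fun z => z.1.2) h
      have hsrc := injcore _ _ ε.2 ε'.2 hv hu
      exact Subtype.ext (FE_ext hsrc he)
    · rintro ⟨⟨⟨v, u⟩, e⟩, hζ1, hζ2, hζ3⟩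
      obtain ⟨x, hcx, hvx, hux⟩ := surjcore v u hζ1
      have heS : e ∈ S.edges := hζ2.1.1
      have heT : e ∈ T.edges := hζ2.1.2
      have hse : Q.s e = vxx x := by rw [hvx]; exact hζ3
      refine ⟨⟨mkFE x e heS heT hse, ?_⟩, Subtype.ext ?_⟩
      · rw [s_mkFE]
        exact hcx
      · show ((vxx ((Fib (pathPi S s₀) (pathPi T t₀)).s (mkFE x e heS heT hse)),
            uxx ((Fib (pathPi S s₀) (pathPi T t₀)).s (mkFE x e heS heT hse))),
            eEE (mkFE x e heS heT hse)) = ((v, u), e)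
        rw [s_mkFE, hvx, hux]
        exact rfl
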